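/- Fix N ∈ ℕ* and T > 0. Let Δ^{(N)} be the discrete Laplacian on step functions constant on intervals [k/N,(k+1)/N) of the torus (indices mod N). Suppose ϱ : [0,T] → L²(S¹;ℝ^d) takes values in such step functions and is supported at a single site: ϱ_s(x) = (v_s / A) · 1_{[k₀/N,(k₀+1)/N)}(x) for some measurable v : [0,T] → ℝ^d, some site k₀ and constant A > 0. Define (ii)_t = ∫_0^t e^{(t−s)Δ^{(N)}} ϱ_s ds. Then there exists a constant C, depending only on T (and not on N, A, k₀, or v), such that ∫_0^T sup_{x∈S¹} |Δ^{(N)} (ii)_t(x)| dt ≤ (C/A) ∫_0^T |v_s| ds. -/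

import Mathlib

open MeasureTheory Set

noncomputable section

namespace Stmt16Aux

def zt (N : ℕ) : ℂ := Complex.exp (2 * Real.pi * Complex.I / (N + 1))

lemma zt_pow (N : ℕ) : zt N ^ (N + 1) = 1 := by
  have h : ((N : ℂ) + 1) ≠ 0 := Nat.cast_add_one_ne_zero N
  rw [zt, ← Complex.exp_nat_mul]
  have : ((N + 1 : ℕ) : ℂ) * (2 * Real.pi * Complex.I / ((N : ℕ) + 1))
      = 2 * Real.pi * Complex.I := by
    push_cast
    field_simp
  rw [this]
  exact Complex.exp_two_pi_mul_I

lemma zt_ne_zero (N : ℕ) : zt N ≠ 0 := Complex.exp_ne_zero _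

lemma zt_pow_mod (N : ℕ) (a : ℕ) : zt N ^ (a % (N + 1)) = zt N ^ a := by
  conv_rhs => rw [← Nat.div_add_mod a (N + 1)]
  rw [pow_add, pow_mul, zt_pow, one_pow, one_mul]

def chr (N : ℕ) (m : Fin (N + 1)) : ℂ := zt N ^ m.val

lemma chr_add (N : ℕ) (a b : Fin (N + 1)) : chr N (a + b) = chr N a * chr N b := by
  rw [chr, chr, chr, Fin.val_add, zt_pow_mod, pow_add]

lemma chr_zero (N : ℕ) : chr N 0 = 1 := by simp [chr]

lemma chr_ne_zero (N : ℕ) (m : Fin (N + 1)) : chr N m ≠ 0 := pow_ne_zero _ (zt_ne_zero N)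

lemma abs_zt (N : ℕ) : ‖zt N‖ = 1 := by
  have h := congrArg norm (zt_pow N)
  rw [norm_pow, norm_one] at h
  rcases lt_trichotomy (‖zt N‖) 1 with hlt | heq | hgt
  · exfalso
    have := pow_lt_one₀ (norm_nonneg _) hlt (Nat.succ_ne_zero N)
    rw [h] at this; exact lt_irrefl _ this
  · exact heq
  · exfalso
    have := one_lt_pow₀ hgt (Nat.succ_ne_zero N)
    rw [h] at this; exact lt_irrefl _ this

lemma abs_chr (N : ℕ) (m : Fin (N + 1)) : ‖chr N m‖ = 1 := by
  rw [chr, norm_pow, abs_zt, one_pow]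

lemma chr_neg (N : ℕ) (m : Fin (N + 1)) : chr N (-m) = (chr N m)⁻¹ := by
  have h : chr N m * chr N (-m) = 1 := by
    rw [← chr_add]
    simp [chr_zero]
  field_simp [chr_ne_zero]
  linear_combination h

lemma chr_orth (N : ℕ) (m : Fin (N + 1)) :
    ∑ n : Fin (N + 1), chr N (n * m) = if m = 0 then ((N : ℂ) + 1) else 0 := by
  have key : ∀ n : Fin (N + 1), chr N (n * m) = (zt N ^ m.val) ^ n.val := by
    intro n
    rw [chr, Fin.val_mul, zt_pow_mod, ← pow_mul, mul_comm]
  simp_rw [key]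
  rw [Fin.sum_univ_eq_sum_range (fun i => (zt N ^ m.val) ^ i) (N + 1)]
  by_cases hm : m = 0
  · subst hm
    simp
  · rw [if_neg hm]
    have hprim : IsPrimitiveRoot (zt N) (N + 1) := by
      have := Complex.isPrimitiveRoot_exp (N + 1) (Nat.succ_ne_zero N)
      simpa [zt] using this
    have hne : zt N ^ m.val ≠ 1 :=
      hprim.pow_ne_one_of_pos_of_lt (fun h => hm (Fin.ext h)) m.isLt
    rw [geom_sum_eq hne]
    rw [← pow_mul, mul_comm, pow_mul, zt_pow, one_pow, sub_self, zero_div]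

lemma chr_inv_sum (N : ℕ) (x : Fin (N + 1) → ℂ) (k : Fin (N + 1)) :
    ∑ n : Fin (N + 1), (∑ k' : Fin (N + 1), x k' * chr N (n * k')) * (chr N (n * k))⁻¹
      = ((N : ℂ) + 1) * x k := by
  simp_rw [Finset.sum_mul]
  rw [Finset.sum_comm]
  have step : ∀ k' n : Fin (N + 1),
      x k' * chr N (n * k') * (chr N (n * k))⁻¹ = x k' * chr N (n * (k' - k)) := by
    intro k' n
    have h1 : chr N (n * (k' - k)) * chr N (n * k) = chr N (n * k') := by
      rw [← chr_add]; open Fin.CommRing in ring_nf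
    field_simp [chr_ne_zero]
    rw [← h1]; ring
  simp_rw [step]
  simp_rw [← Finset.mul_sum, chr_orth]
  have : ∀ k' : Fin (N + 1), (k' - k = 0) = (k' = k) := by
    intro k'; simp [sub_eq_zero]
  simp_rw [this]
  simp [mul_ite, Finset.sum_ite_eq', mul_comm]

lemma reindex_sub (N : ℕ) (x : Fin (N + 1) → ℂ) (n a : Fin (N + 1)) :
    ∑ k : Fin (N + 1), x (k - a) * chr N (n * k)
      = chr N (n * a) * ∑ k : Fin (N + 1), x k * chr N (n * k) := by
  rw [Finset.mul_sum]
  apply Fintype.sum_equiv (Equiv.subRight a)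
  intro k
  simp only [Equiv.subRight_apply]
  have h1 : chr N (n * (k - a)) * chr N (n * a) = chr N (n * k) := by
    rw [← chr_add]; open Fin.CommRing in ring_nf
  rw [← h1]
  ring

lemma chr_mu (N : ℕ) (n : Fin (N + 1)) :
    chr N n + (chr N n)⁻¹ - 2
      = ((2 * Real.cos (2 * Real.pi * n.val / ((N : ℝ) + 1)) - 2 : ℝ) : ℂ) := by
  set θ : ℝ := 2 * Real.pi * n.val / ((N : ℝ) + 1) with hθ
  have h1 : chr N n = Complex.exp ((θ : ℂ) * Complex.I) := by
    rw [chr, zt, ← Complex.exp_nat_mul]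
    congr 1
    have hN : ((N : ℂ) + 1) ≠ 0 := Nat.cast_add_one_ne_zero N
    rw [hθ]
    push_cast
    field_simp
  rw [h1, ← Complex.exp_neg]
  have h2 : -((θ : ℂ) * Complex.I) = (-θ : ℂ) * Complex.I := by ring
  rw [h2]
  have h3 : Complex.exp ((θ : ℂ) * Complex.I) + Complex.exp ((-θ : ℂ) * Complex.I)
      = 2 * Complex.cos (θ : ℂ) := by
    rw [← Complex.two_cos]
  rw [show Complex.exp ((θ : ℂ) * Complex.I) + Complex.exp ((-θ : ℂ) * Complex.I) - 2
      = 2 * Complex.cos (θ : ℂ) - 2 by rw [h3], ← Complex.ofReal_cos]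
  push_cast
  ring

def lamF (N : ℕ) (n : Fin (N + 1)) : ℝ :=
  ((N : ℝ) + 1) ^ 2 * (2 - 2 * Real.cos (2 * Real.pi * n.val / ((N : ℝ) + 1)))

lemma lamF_nonneg (N : ℕ) (n : Fin (N + 1)) : 0 ≤ lamF N n := by
  have h1 := Real.cos_le_one (2 * Real.pi * n.val / ((N : ℝ) + 1))
  have h2 : (0:ℝ) ≤ ((N : ℝ) + 1) ^ 2 := sq_nonneg _
  rw [lamF]
  nlinarith

lemma lam_spec (N : ℕ) (n : Fin (N + 1)) :
    (((((N : ℝ) + 1) ^ 2 : ℝ)) : ℂ) * (chr N n + (chr N n)⁻¹ - 2)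
      = -((lamF N n : ℝ) : ℂ) := by
  rw [chr_mu, lamF]
  push_cast
  ring

lemma euc_abs_le {d : ℕ} (x : EuclideanSpace ℝ (Fin d)) (j : Fin d) : |x j| ≤ ‖x‖ := by
  rw [EuclideanSpace.norm_eq]
  have h1 : |x j| = Real.sqrt ((x j) ^ 2) := (Real.sqrt_sq_eq_abs _).symm
  rw [h1]
  apply Real.sqrt_le_sqrt
  have := Finset.single_le_sum (f := fun i => ‖x i‖ ^ 2) (fun i _ => sq_nonneg _)
    (Finset.mem_univ j)
  simpa [Real.norm_eq_abs, sq_abs] using this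

lemma euc_norm_le_sum {d : ℕ} (x : EuclideanSpace ℝ (Fin d)) :
    ‖x‖ ≤ ∑ j : Fin d, |x j| := by
  have hx : x = ∑ j : Fin d, EuclideanSpace.single j (x j) := by
    ext i
    rw [WithLp.ofLp_sum, Finset.sum_apply]
    simp [EuclideanSpace.single_apply]
  calc ‖x‖ = ‖∑ j : Fin d, EuclideanSpace.single j (x j)‖ := by rw [← hx]
    _ ≤ ∑ j : Fin d, ‖EuclideanSpace.single j (x j)‖ := norm_sum_le _ _
    _ = ∑ j : Fin d, |x j| := by
        simp [EuclideanSpace.norm_single, Real.norm_eq_abs]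

lemma aux_exp (L s T : ℝ) (hL : 0 ≤ L) (hsT : s ≤ T) :
    L * ∫ t in s..T, Real.exp (-L * (t - s)) ≤ 1 := by
  rcases hL.eq_or_lt with h0 | hpos
  · rw [← h0]; norm_num
  · have hL0 : L ≠ 0 := ne_of_gt hpos
    have hder : ∀ t ∈ uIcc s T,
        HasDerivAt (fun u => -Real.exp (-L * (u - s)) / L) (Real.exp (-L * (t - s))) t := by
      intro t _
      have h1 : HasDerivAt (fun u : ℝ => -L * (u - s)) (-L) t := by
        simpa using ((hasDerivAt_id t).sub_const s).const_mul (-L)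
      have h3 := (h1.exp.neg).div_const L
      refine h3.congr_deriv ?_
      field_simp
    have hint : IntervalIntegrable (fun t => Real.exp (-L * (t - s))) volume s T :=
      (Real.continuous_exp.comp (by continuity)).intervalIntegrable s T
    rw [intervalIntegral.integral_eq_sub_of_hasDerivAt hder hint]
    have hexp : 0 < Real.exp (-L * (T - s)) := Real.exp_pos _
    have h4 : L * (-Real.exp (-L * (T - s)) / L - -Real.exp (-L * (s - s)) / L)
        = 1 - Real.exp (-L * (T - s)) := by
      rw [sub_self, mul_zero, Real.exp_zero]
      field_simp
      ring
    rw [h4]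
    linarith

lemma ode_bound (T L : ℝ) (hL : 0 ≤ L)
    (c b : ℝ → ℂ) (f : ℝ → ℝ)
    (hbm : Measurable b) (hbf : ∀ s, ‖b s‖ ≤ f s)
    (hfi : IntegrableOn f (Icc (0:ℝ) T))
    (hc0 : c 0 = 0)
    (hder : ∀ t ∈ Icc (0:ℝ) T, HasDerivAt c (-(L:ℂ) * c t + b t) t)
    (t : ℝ) (ht : t ∈ Icc (0:ℝ) T) :
    ‖c t‖ ≤ ∫ s in (0:ℝ)..t, Real.exp (-L * (t - s)) * f s := by
  have hf0 : ∀ s, 0 ≤ f s := fun s => le_trans (norm_nonneg _) (hbf s)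
  have hbi : IntegrableOn b (Icc (0:ℝ) T) := by
    refine Integrable.mono' hfi hbm.aestronglyMeasurable.restrict ?_
    exact Filter.Eventually.of_forall (fun s => by simpa using hbf s)
  have h0t : (0:ℝ) ≤ t := ht.1
  have hIoc : Ioc (0:ℝ) t ⊆ Icc (0:ℝ) T := fun s hs => ⟨le_of_lt hs.1, hs.2.trans ht.2⟩
  have hbint : IntervalIntegrable b volume 0 t := by
    rw [intervalIntegrable_iff_integrableOn_Ioc_of_le h0t]
    exact hbi.mono_set hIoc
  have hfint : IntervalIntegrable f volume 0 t := by
    rw [intervalIntegrable_iff_integrableOn_Ioc_of_le h0t]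
    exact hfi.mono_set hIoc
  have hexpder : ∀ u : ℝ, HasDerivAt (fun w : ℝ => Complex.exp (L * w))
      ((L:ℂ) * Complex.exp (L * u)) u := by
    intro u
    have h1 : HasDerivAt (fun w : ℝ => ((w : ℝ) : ℂ)) 1 u := Complex.ofRealCLM.hasDerivAt
    have h2 : HasDerivAt (fun w : ℝ => (L:ℂ) * (w:ℂ)) ((L:ℂ) * 1) u := h1.const_mul (L:ℂ)
    have h3 := h2.cexp
    simp only [mul_one] at h2 h3
    convert h3 using 1
    ring
  have hder2 : ∀ u ∈ uIcc (0:ℝ) t,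
      HasDerivAt (fun w : ℝ => Complex.exp ((L:ℂ) * w) * c w)
        (Complex.exp ((L:ℂ) * u) * b u) u := by
    intro u hu
    have hu' : u ∈ Icc (0:ℝ) T := by
      rw [uIcc_of_le h0t] at hu; exact ⟨hu.1, hu.2.trans ht.2⟩
    have h5 := (hexpder u).mul (hder u hu')
    refine h5.congr_deriv ?_
    ring
  have hexm : IntervalIntegrable (fun u : ℝ => Complex.exp ((L:ℂ) * u) * b u) volume 0 t := by
    apply IntervalIntegrable.continuousOn_mul hbint
    exact (Complex.continuous_exp.comp (by continuity)).continuousOn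
  have hftc := intervalIntegral.integral_eq_sub_of_hasDerivAt hder2 hexm
  rw [hc0, mul_zero, sub_zero] at hftc
  have habs : ∀ u : ℝ, ‖Complex.exp ((L:ℂ) * (u:ℂ))‖ = Real.exp (L * u) := by
    intro u
    rw [← Complex.ofReal_mul, Complex.norm_exp_ofReal]
  have h2 : Real.exp (L * t) * ‖c t‖
      = ‖∫ u in (0:ℝ)..t, Complex.exp ((L:ℂ) * u) * b u‖ := by
    rw [hftc, norm_mul, habs]
  have h3 : ‖∫ u in (0:ℝ)..t, Complex.exp ((L:ℂ) * u) * b u‖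
      ≤ ∫ u in (0:ℝ)..t, Real.exp (L * u) * f u := by
    refine le_trans (intervalIntegral.norm_integral_le_integral_norm h0t) ?_
    apply intervalIntegral.integral_mono_on h0t hexm.norm
    · apply IntervalIntegrable.continuousOn_mul hfint
      exact (Real.continuous_exp.comp (by continuity)).continuousOn
    · intro u _
      rw [norm_mul, habs]
      exact mul_le_mul_of_nonneg_left (hbf u) (Real.exp_pos _).le
  have h4 : ∫ s in (0:ℝ)..t, Real.exp (-L * (t - s)) * f s
      = Real.exp (-(L * t)) * ∫ u in (0:ℝ)..t, Real.exp (L * u) * f u := by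
    rw [← intervalIntegral.integral_const_mul]
    apply intervalIntegral.integral_congr
    intro u _
    simp only
    rw [← mul_assoc, ← Real.exp_add]
    ring_nf
  rw [h4]
  have h5 : ‖c t‖ = Real.exp (-(L * t)) *
      ‖∫ u in (0:ℝ)..t, Complex.exp ((L:ℂ) * u) * b u‖ := by
    rw [← h2, ← mul_assoc, ← Real.exp_add]
    simp
  rw [h5]
  exact mul_le_mul_of_nonneg_left h3 (Real.exp_pos _).le

lemma aux_conv (T L : ℝ) (hT : 0 < T) (hL : 0 ≤ L) (f : ℝ → ℝ)
    (hfm : Measurable f) (hf0 : ∀ s, 0 ≤ f s) (hfi : IntegrableOn f (Icc (0:ℝ) T)) :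
    IntegrableOn (fun t => ∫ s in (0:ℝ)..t, Real.exp (-L * (t - s)) * f s) (Icc (0:ℝ) T)
    ∧ L * ∫ t in Icc (0:ℝ) T, (∫ s in (0:ℝ)..t, Real.exp (-L * (t - s)) * f s)
      ≤ ∫ s in Icc (0:ℝ) T, f s := by
  set μ : Measure ℝ := volume.restrict (Icc (0:ℝ) T) with hμ
  haveI : IsFiniteMeasure μ := by
    constructor
    rw [hμ, Measure.restrict_apply_univ]
    exact measure_Icc_lt_top
  set F : ℝ × ℝ → ℝ :=
    fun p => Set.indicator {p : ℝ × ℝ | p.2 ∈ Ioc 0 p.1}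
      (fun p => Real.exp (-L * (p.1 - p.2)) * f p.2) p with hF
  have hSm : MeasurableSet {p : ℝ × ℝ | p.2 ∈ Ioc 0 p.1} := by
    apply MeasurableSet.inter
    · exact measurableSet_lt measurable_const measurable_snd
    · exact measurableSet_le measurable_snd measurable_fst
  have hFm : Measurable F := by
    apply Measurable.indicator _ hSm
    exact ((measurable_fst.sub measurable_snd).const_mul (-L)).exp.mul (hfm.comp measurable_snd)
  have hdom : Integrable (fun p : ℝ × ℝ => f p.2) (μ.prod μ) := by
    have h1 : Integrable (fun _ : ℝ => (1:ℝ)) μ := integrable_const 1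
    have := h1.mul_prod hfi
    simpa using this
  have hF0 : ∀ p, 0 ≤ F p := by
    intro p
    apply Set.indicator_nonneg
    intro q _
    exact mul_nonneg (Real.exp_pos _).le (hf0 _)
  have hFle : ∀ p : ℝ × ℝ, ‖F p‖ ≤ f p.2 := by
    intro p
    rw [Real.norm_eq_abs, abs_of_nonneg (hF0 p)]
    show Set.indicator {p : ℝ × ℝ | p.2 ∈ Ioc 0 p.1}
      (fun p => Real.exp (-L * (p.1 - p.2)) * f p.2) p ≤ f p.2
    by_cases hp : p ∈ {p : ℝ × ℝ | p.2 ∈ Ioc 0 p.1}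
    · rw [Set.indicator_of_mem hp]
      have hp' : p.2 ∈ Ioc 0 p.1 := hp
      have : Real.exp (-L * (p.1 - p.2)) ≤ 1 := by
        rw [Real.exp_le_one_iff]
        have : 0 ≤ p.1 - p.2 := by linarith [hp'.2]
        nlinarith
      nlinarith [hf0 p.2]
    · rw [Set.indicator_of_notMem hp]
      exact hf0 p.2
  have hFi : Integrable F (μ.prod μ) := by
    refine Integrable.mono' hdom hFm.aestronglyMeasurable ?_
    exact Filter.Eventually.of_forall hFle
  have hkey : ∀ t ∈ Icc (0:ℝ) T,
      (∫ s, F (t, s) ∂μ) = ∫ s in (0:ℝ)..t, Real.exp (-L * (t - s)) * f s := by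
    intro t ht
    have h1 : (fun s => F (t, s))
        = Set.indicator (Ioc (0:ℝ) t) (fun s => Real.exp (-L * (t - s)) * f s) := by
      funext s
      simp [hF, Set.indicator]
    rw [h1, integral_indicator measurableSet_Ioc]
    rw [hμ, Measure.restrict_restrict measurableSet_Ioc]
    have h2 : Ioc (0:ℝ) t ∩ Icc (0:ℝ) T = Ioc (0:ℝ) t := by
      apply inter_eq_self_of_subset_left
      exact fun s hs => ⟨le_of_lt hs.1, hs.2.trans ht.2⟩
    rw [h2, intervalIntegral.integral_of_le ht.1]
  constructor
  · have h1 : Integrable (fun t => ∫ s, F (t, s) ∂μ) μ := hFi.integral_prod_left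
    apply h1.congr
    rw [hμ]
    rw [Filter.eventuallyEq_iff_exists_mem]
    refine ⟨Icc (0:ℝ) T, ?_, fun t ht => (hkey t ht)⟩
    rw [mem_ae_iff]
    simp [measurableSet_Icc]
  · have hswap : ∫ t, (∫ s, F (t, s) ∂μ) ∂μ = ∫ s, (∫ t, F (t, s) ∂μ) ∂μ :=
      integral_integral_swap hFi
    have hcongr : ∫ t in Icc (0:ℝ) T, (∫ s in (0:ℝ)..t, Real.exp (-L * (t - s)) * f s)
        = ∫ t, (∫ s, F (t, s) ∂μ) ∂μ := by
      rw [hμ]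
      apply integral_congr_ae
      rw [Filter.eventuallyEq_iff_exists_mem]
      refine ⟨Icc (0:ℝ) T, ?_, fun t ht => (hkey t ht).symm⟩
      rw [mem_ae_iff]
      simp [measurableSet_Icc]
    rw [hcongr, hswap, ← integral_const_mul]
    apply integral_mono_of_nonneg
    · refine Filter.Eventually.of_forall (fun s => ?_)
      exact mul_nonneg hL (integral_nonneg (fun t => hF0 _))
    · exact hfi
    · rw [hμ]
      refine (ae_restrict_iff' measurableSet_Icc).mpr (Filter.Eventually.of_forall fun s hs => ?_)
      show L * ∫ t in Icc (0:ℝ) T, F (t, s) ≤ f s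
      by_cases hs0 : 0 < s
      · have heq : (fun t => F (t, s))
            = Set.indicator (Ici s) (fun t => Real.exp (-L * (t - s)) * f s) := by
          funext t
          simp [hF, Set.indicator, mem_Ioc, mem_Ici, hs0]
        rw [heq, integral_indicator measurableSet_Ici,
          Measure.restrict_restrict measurableSet_Ici]
        have h2 : Ici s ∩ Icc (0:ℝ) T = Icc s T := by
          ext u
          simp only [mem_inter_iff, mem_Ici, mem_Icc]
          constructor
          · rintro ⟨h1, _, h3⟩; exact ⟨h1, h3⟩
          · rintro ⟨h1, h3⟩; exact ⟨h1, le_trans hs.1 h1, h3⟩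
        rw [h2, integral_Icc_eq_integral_Ioc, ← intervalIntegral.integral_of_le hs.2]
        rw [intervalIntegral.integral_mul_const, ← mul_assoc]
        calc L * (∫ t in s..T, Real.exp (-L * (t - s))) * f s ≤ 1 * f s :=
              mul_le_mul_of_nonneg_right (aux_exp L s T hL hs.2) (hf0 s)
          _ = f s := one_mul _
      · have heq : (fun t => F (t, s)) = fun _ => (0:ℝ) := by
          funext t
          simp [hF, Set.indicator, mem_Ioc, hs0]
        rw [heq]
        simp [hf0 s]

lemma sum_identity (N : ℕ) (n k₀ : Fin (N + 1)) (y : Fin (N + 1) → ℝ) (q : ℝ) :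
    (∑ k : Fin (N + 1), ((((N : ℝ) + 1) ^ 2 * (y (k + 1) + y (k - 1) - 2 * y k)
        + (if k = k₀ then q else 0) : ℝ) : ℂ) * chr N (n * k))
      = -((lamF N n : ℝ) : ℂ) * (∑ k : Fin (N + 1), ((y k : ℝ) : ℂ) * chr N (n * k))
        + (q : ℂ) * chr N (n * k₀) := by
  have e1 : ∑ k : Fin (N + 1), ((y (k + 1) : ℝ) : ℂ) * chr N (n * k)
      = chr N (n * (-1)) * ∑ k : Fin (N + 1), ((y k : ℝ) : ℂ) * chr N (n * k) := by
    have h := reindex_sub N (fun k => ((y k : ℝ) : ℂ)) n (-1)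
    simpa [sub_neg_eq_add] using h
  have e2 : ∑ k : Fin (N + 1), ((y (k - 1) : ℝ) : ℂ) * chr N (n * k)
      = chr N (n * 1) * ∑ k : Fin (N + 1), ((y k : ℝ) : ℂ) * chr N (n * k) :=
    reindex_sub N (fun k => ((y k : ℝ) : ℂ)) n 1
  have hterm : ∀ k : Fin (N + 1), ((((N : ℝ) + 1) ^ 2 * (y (k + 1) + y (k - 1) - 2 * y k)
        + (if k = k₀ then q else 0) : ℝ) : ℂ) * chr N (n * k)
      = (((((N : ℝ) + 1) ^ 2 : ℝ)) : ℂ) * (((y (k + 1) : ℝ) : ℂ) * chr N (n * k))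
        + (((((N : ℝ) + 1) ^ 2 : ℝ)) : ℂ) * (((y (k - 1) : ℝ) : ℂ) * chr N (n * k))
        - (2 * (((((N : ℝ) + 1) ^ 2 : ℝ)) : ℂ)) * (((y k : ℝ) : ℂ) * chr N (n * k))
        + (if k = k₀ then (q : ℂ) else 0) * chr N (n * k) := by
    intro k
    split_ifs <;> push_cast <;> ring
  rw [Finset.sum_congr rfl (fun k _ => hterm k)]
  rw [Finset.sum_add_distrib, Finset.sum_sub_distrib, Finset.sum_add_distrib,
    ← Finset.mul_sum, ← Finset.mul_sum, ← Finset.mul_sum]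
  have hite : ∑ k : Fin (N + 1), (if k = k₀ then (q : ℂ) else 0) * chr N (n * k)
      = (q : ℂ) * chr N (n * k₀) := by
    simp [ite_mul, Finset.sum_ite_eq']
  rw [hite, e1, e2]
  have hneg : chr N (n * (-1)) = (chr N n)⁻¹ := by rw [mul_neg_one, chr_neg]
  have hone : chr N (n * 1) = chr N n := by rw [mul_one]
  rw [hneg, hone]
  linear_combination (∑ k : Fin (N + 1), ((y k : ℝ) : ℂ) * chr N (n * k)) * lam_spec N n

lemma lap_inv (N : ℕ) (y : Fin (N + 1) → ℝ) (k : Fin (N + 1)) :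
    ((((N : ℝ) + 1) : ℝ) : ℂ) * ((((N : ℝ) + 1) ^ 2 * (y (k + 1) + y (k - 1) - 2 * y k) : ℝ) : ℂ)
      = ∑ n : Fin (N + 1), -((lamF N n : ℝ) : ℂ)
          * (∑ k' : Fin (N + 1), ((y k' : ℝ) : ℂ) * chr N (n * k')) * (chr N (n * k))⁻¹ := by
  have i1 := chr_inv_sum N (fun k' => ((y k' : ℝ) : ℂ)) (k + 1)
  have i2 := chr_inv_sum N (fun k' => ((y k' : ℝ) : ℂ)) (k - 1)
  have i3 := chr_inv_sum N (fun k' => ((y k' : ℝ) : ℂ)) k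
  have hterm : ∀ n : Fin (N + 1),
      -((lamF N n : ℝ) : ℂ)
          * (∑ k' : Fin (N + 1), ((y k' : ℝ) : ℂ) * chr N (n * k')) * (chr N (n * k))⁻¹
      = (((((N : ℝ) + 1) ^ 2 : ℝ)) : ℂ) *
          ((∑ k' : Fin (N + 1), ((y k' : ℝ) : ℂ) * chr N (n * k')) * (chr N (n * (k + 1)))⁻¹)
        + (((((N : ℝ) + 1) ^ 2 : ℝ)) : ℂ) *
          ((∑ k' : Fin (N + 1), ((y k' : ℝ) : ℂ) * chr N (n * k')) * (chr N (n * (k - 1)))⁻¹)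
        - (2 * (((((N : ℝ) + 1) ^ 2 : ℝ)) : ℂ)) *
          ((∑ k' : Fin (N + 1), ((y k' : ℝ) : ℂ) * chr N (n * k')) * (chr N (n * k))⁻¹) := by
    intro n
    have hp : chr N (n * (k + 1)) = chr N (n * k) * chr N n := by
      rw [← chr_add]; open Fin.CommRing in ring_nf
    have hm : chr N (n * (k - 1)) = chr N (n * k) * (chr N n)⁻¹ := by
      have h1 : chr N (n * (k - 1)) * chr N n = chr N (n * k) := by
        rw [← chr_add]; open Fin.CommRing in ring_nf
      field_simp [chr_ne_zero]
      linear_combination h1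
    rw [hp, hm, mul_inv, mul_inv, inv_inv]
    linear_combination (-((∑ k' : Fin (N + 1), ((y k' : ℝ) : ℂ) * chr N (n * k'))
      * (chr N (n * k))⁻¹)) * lam_spec N n
  rw [Finset.sum_congr rfl (fun n _ => hterm n)]
  rw [Finset.sum_sub_distrib, Finset.sum_add_distrib,
    ← Finset.mul_sum, ← Finset.mul_sum, ← Finset.mul_sum, i1, i2, i3]
  push_cast
  ring

end Stmt16Aux

open Stmt16Aux in
/-- Let `Δ^{(N)}` be the discrete Laplacian on families of coefficients
indexed cyclically by the `N+1` sites of the discretized torus, with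
`(Δ^{(N)} c)_k = (N+1)²(c_{k+1} + c_{k−1} − 2c_k)`, and let `ϱ_s` be supported at a single
site `k₀` with value `v_s/A`. If `(ii)_t = ∫_0^t e^{(t−s)Δ^{(N)}} ϱ_s ds`, i.e. `ii 0 = 0`
and `ii' = Δ^{(N)} ii + ϱ`, then `∫_0^T sup_k |Δ^{(N)}(ii)_t|_k dt ≤ (C/A) ∫_0^T |v_s| ds`,
for a constant `C` depending only on `T` (and not on `N`, `A`, `k₀`, or `v`). -/
theorem stmt16 (d : ℕ) (T : ℝ) (hT : 0 < T) :
    ∃ C : ℝ, 0 < C ∧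
      ∀ (N : ℕ) (A : ℝ), 0 < A →
      ∀ (k₀ : Fin (N + 1)) (v : ℝ → EuclideanSpace ℝ (Fin d)),
        Measurable v →
        IntegrableOn (fun s => ‖v s‖) (Icc (0:ℝ) T) →
      ∀ ii : ℝ → Fin (N + 1) → EuclideanSpace ℝ (Fin d),
        ii 0 = 0 →
        (∀ t ∈ Icc (0:ℝ) T, HasDerivAt ii
          (fun k => (((N : ℝ) + 1) ^ 2) • (ii t (k + 1) + ii t (k - 1) - (2:ℝ) • ii t k)
            + (if k = k₀ then (1 / A) • v t else 0)) t) →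
        (∫ t in Icc (0:ℝ) T,
            ⨆ k : Fin (N + 1),
              ‖(((N : ℝ) + 1) ^ 2) • (ii t (k + 1) + ii t (k - 1) - (2:ℝ) • ii t k)‖)
          ≤ (C / A) * ∫ s in Icc (0:ℝ) T, ‖v s‖ := by
  refine ⟨(d : ℝ) + 1, by positivity, ?_⟩
  intro N A hA k₀ v hvm hvi ii hii0 hder
  have hMpos : (0:ℝ) < (N : ℝ) + 1 := by positivity
  -- the driving function
  have hfm : Measurable (fun s => ‖v s‖ / A) := hvm.norm.div_const A
  have hf0 : ∀ s, 0 ≤ ‖v s‖ / A := fun s => div_nonneg (norm_nonneg _) hA.le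
  have hfi : IntegrableOn (fun s => ‖v s‖ / A) (Icc (0:ℝ) T) := hvi.div_const A
  -- component derivatives
  have hcomp : ∀ (j : Fin d) (k : Fin (N + 1)), ∀ t ∈ Icc (0:ℝ) T,
      HasDerivAt (fun u => (ii u k j : ℝ))
        (((N : ℝ) + 1) ^ 2 * (ii t (k + 1) j + ii t (k - 1) j - 2 * ii t k j)
          + (if k = k₀ then (1 / A) * v t j else 0)) t := by
    intro j k t ht
    have h1 := (hasDerivAt_pi.mp (hder t ht)) k
    have h2 := (EuclideanSpace.proj j).hasFDerivAt.comp_hasDerivAt t h1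
    refine h2.congr_deriv ?_
    simp [apply_ite (fun x : EuclideanSpace ℝ (Fin d) => x j)]
  -- Fourier coefficients
  have hc0 : ∀ (n : Fin (N + 1)) (j : Fin d),
      (∑ k : Fin (N + 1), ((ii 0 k j : ℝ) : ℂ) * chr N (n * k)) = 0 := by
    intro n j
    rw [hii0]
    simp
  have hbm : ∀ (n : Fin (N + 1)) (j : Fin d),
      Measurable (fun s => (((1 / A) * v s j : ℝ) : ℂ) * chr N (n * k₀)) := by
    intro n j
    exact (Complex.measurable_ofReal.comp
      (((measurable_pi_apply j).comp ((WithLp.measurable_ofLp _ _).comp hvm)).const_mul (1 / A))).mul_const _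
  have hbfle : ∀ (n : Fin (N + 1)) (j : Fin d) (s : ℝ),
      ‖(((1 / A) * v s j : ℝ) : ℂ) * chr N (n * k₀)‖ ≤ ‖v s‖ / A := by
    intro n j s
    rw [norm_mul, abs_chr, mul_one, Complex.norm_real, Real.norm_eq_abs, abs_mul, abs_of_pos (by positivity :
      (0:ℝ) < 1 / A), one_div, inv_mul_eq_div, div_le_div_iff_of_pos_right hA]
    exact euc_abs_le (v s) j
  have hcder : ∀ (n : Fin (N + 1)) (j : Fin d), ∀ t ∈ Icc (0:ℝ) T,
      HasDerivAt (fun u => ∑ k : Fin (N + 1), ((ii u k j : ℝ) : ℂ) * chr N (n * k))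
        (-((lamF N n : ℝ) : ℂ) * (∑ k : Fin (N + 1), ((ii t k j : ℝ) : ℂ) * chr N (n * k))
          + (((1 / A) * v t j : ℝ) : ℂ) * chr N (n * k₀)) t := by
    intro n j t ht
    have h1 : HasDerivAt (fun u => ∑ k : Fin (N + 1), ((ii u k j : ℝ) : ℂ) * chr N (n * k))
        (∑ k : Fin (N + 1),
          ((((N : ℝ) + 1) ^ 2 * (ii t (k + 1) j + ii t (k - 1) j - 2 * ii t k j)
            + (if k = k₀ then (1 / A) * v t j else 0) : ℝ) : ℂ) * chr N (n * k)) t := by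
      apply HasDerivAt.fun_sum
      intro k _
      exact (Complex.ofRealCLM.hasFDerivAt.comp_hasDerivAt t (hcomp j k t ht)).mul_const _
    have h2 := sum_identity N n k₀ (fun k => ii t k j) ((1 / A) * v t j)
    rw [h2] at h1
    exact h1
  -- bound on Fourier coefficients
  have hcb : ∀ (n : Fin (N + 1)) (j : Fin d), ∀ t ∈ Icc (0:ℝ) T,
      ‖∑ k : Fin (N + 1), ((ii t k j : ℝ) : ℂ) * chr N (n * k)‖
        ≤ ∫ s in (0:ℝ)..t, Real.exp (-(lamF N n) * (t - s)) * (‖v s‖ / A) := by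
    intro n j t ht
    exact ode_bound T (lamF N n) (lamF_nonneg N n) _ _ _ (hbm n j) (hbfle n j) hfi
      (hc0 n j) (hcder n j) t ht
  -- pointwise bound on the sup
  have hptwise : ∀ t ∈ Icc (0:ℝ) T,
      (⨆ k : Fin (N + 1),
        ‖(((N : ℝ) + 1) ^ 2) • (ii t (k + 1) + ii t (k - 1) - (2:ℝ) • ii t k)‖)
      ≤ (d : ℝ) * ((1 / ((N : ℝ) + 1)) * ∑ n : Fin (N + 1),
          lamF N n * ∫ s in (0:ℝ)..t, Real.exp (-(lamF N n) * (t - s)) * (‖v s‖ / A)) := by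
    intro t ht
    apply ciSup_le
    intro k
    have hcompval : ∀ j : Fin d,
        ((((N : ℝ) + 1) ^ 2) • (ii t (k + 1) + ii t (k - 1) - (2:ℝ) • ii t k)) j
          = ((N : ℝ) + 1) ^ 2 * (ii t (k + 1) j + ii t (k - 1) j - 2 * ii t k j) := by
      intro j
      simp only [PiLp.smul_apply, PiLp.add_apply, PiLp.sub_apply, smul_eq_mul]
    have hjb : ∀ j : Fin d,
        |((N : ℝ) + 1) ^ 2 * (ii t (k + 1) j + ii t (k - 1) j - 2 * ii t k j)|
          ≤ (1 / ((N : ℝ) + 1)) * ∑ n : Fin (N + 1),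
              lamF N n * ∫ s in (0:ℝ)..t, Real.exp (-(lamF N n) * (t - s)) * (‖v s‖ / A) := by
      intro j
      have h6 := congrArg norm (lap_inv N (fun k => ii t k j) k)
      rw [← Complex.ofReal_mul, Complex.norm_real, Real.norm_eq_abs, abs_mul,
        abs_of_pos hMpos] at h6
      have h7 : ‖∑ n : Fin (N + 1), -((lamF N n : ℝ) : ℂ)
            * (∑ k' : Fin (N + 1), ((ii t k' j : ℝ) : ℂ) * chr N (n * k'))
            * (chr N (n * k))⁻¹‖
          ≤ ∑ n : Fin (N + 1),
              lamF N n * ∫ s in (0:ℝ)..t, Real.exp (-(lamF N n) * (t - s)) * (‖v s‖ / A) := by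
        refine le_trans (norm_sum_le _ _) (Finset.sum_le_sum ?_)
        intro n _
        rw [norm_mul, norm_mul, norm_inv, abs_chr, inv_one, mul_one,
          norm_neg, Complex.norm_real, Real.norm_eq_abs, abs_of_nonneg (lamF_nonneg N n)]
        exact mul_le_mul_of_nonneg_left (hcb n j t ht) (lamF_nonneg N n)
      rw [← h6] at h7
      rw [one_div, inv_mul_eq_div, le_div_iff₀ hMpos, mul_comm]
      exact h7
    calc ‖(((N : ℝ) + 1) ^ 2) • (ii t (k + 1) + ii t (k - 1) - (2:ℝ) • ii t k)‖
        ≤ ∑ j : Fin d,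
            |((((N : ℝ) + 1) ^ 2) • (ii t (k + 1) + ii t (k - 1) - (2:ℝ) • ii t k)) j| :=
          euc_norm_le_sum _
      _ ≤ ∑ _j : Fin d, (1 / ((N : ℝ) + 1)) * ∑ n : Fin (N + 1),
              lamF N n * ∫ s in (0:ℝ)..t, Real.exp (-(lamF N n) * (t - s)) * (‖v s‖ / A) := by
          apply Finset.sum_le_sum
          intro j _
          rw [hcompval j]
          exact hjb j
      _ = (d : ℝ) * ((1 / ((N : ℝ) + 1)) * ∑ n : Fin (N + 1),
              lamF N n * ∫ s in (0:ℝ)..t, Real.exp (-(lamF N n) * (t - s)) * (‖v s‖ / A)) := by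
          rw [Finset.sum_const, Finset.card_univ, Fintype.card_fin, nsmul_eq_mul]
  -- integrate
  have hconv := fun n : Fin (N + 1) =>
    aux_conv T (lamF N n) hT (lamF_nonneg N n) (fun s => ‖v s‖ / A) hfm hf0 hfi
  have hgint : IntegrableOn (fun t => (d : ℝ) * ((1 / ((N : ℝ) + 1)) * ∑ n : Fin (N + 1),
      lamF N n * ∫ s in (0:ℝ)..t, Real.exp (-(lamF N n) * (t - s)) * (‖v s‖ / A)))
      (Icc (0:ℝ) T) := by
    apply Integrable.const_mul
    apply Integrable.const_mul
    apply integrable_finset_sum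
    intro n _
    exact ((hconv n).1).const_mul _
  have hstep1 : (∫ t in Icc (0:ℝ) T,
        ⨆ k : Fin (N + 1),
          ‖(((N : ℝ) + 1) ^ 2) • (ii t (k + 1) + ii t (k - 1) - (2:ℝ) • ii t k)‖)
      ≤ ∫ t in Icc (0:ℝ) T, (d : ℝ) * ((1 / ((N : ℝ) + 1)) * ∑ n : Fin (N + 1),
          lamF N n * ∫ s in (0:ℝ)..t, Real.exp (-(lamF N n) * (t - s)) * (‖v s‖ / A)) := by
    apply integral_mono_of_nonneg
    · refine Filter.Eventually.of_forall (fun t => ?_)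
      exact Real.iSup_nonneg (fun k => norm_nonneg _)
    · exact hgint
    · refine (ae_restrict_iff' measurableSet_Icc).mpr
        (Filter.Eventually.of_forall fun t ht => hptwise t ht)
  have hstep2 : (∫ t in Icc (0:ℝ) T, (d : ℝ) * ((1 / ((N : ℝ) + 1)) * ∑ n : Fin (N + 1),
        lamF N n * ∫ s in (0:ℝ)..t, Real.exp (-(lamF N n) * (t - s)) * (‖v s‖ / A)))
      ≤ (d : ℝ) * ∫ s in Icc (0:ℝ) T, ‖v s‖ / A := by
    rw [integral_const_mul, integral_const_mul]
    have hsum : (∫ t in Icc (0:ℝ) T, ∑ n : Fin (N + 1),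
          lamF N n * ∫ s in (0:ℝ)..t, Real.exp (-(lamF N n) * (t - s)) * (‖v s‖ / A))
        = ∑ n : Fin (N + 1), lamF N n * ∫ t in Icc (0:ℝ) T,
            (∫ s in (0:ℝ)..t, Real.exp (-(lamF N n) * (t - s)) * (‖v s‖ / A)) := by
      rw [integral_finset_sum]
      · apply Finset.sum_congr rfl
        intro n _
        rw [integral_const_mul]
      · intro n _
        exact ((hconv n).1).const_mul _
    rw [hsum]
    have hbound : (∑ n : Fin (N + 1), lamF N n * ∫ t in Icc (0:ℝ) T,
          (∫ s in (0:ℝ)..t, Real.exp (-(lamF N n) * (t - s)) * (‖v s‖ / A)))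
        ≤ ∑ _n : Fin (N + 1), ∫ s in Icc (0:ℝ) T, ‖v s‖ / A := by
      apply Finset.sum_le_sum
      intro n _
      exact (hconv n).2
    have hcard : (∑ _n : Fin (N + 1), ∫ s in Icc (0:ℝ) T, ‖v s‖ / A)
        = ((N : ℝ) + 1) * ∫ s in Icc (0:ℝ) T, ‖v s‖ / A := by
      rw [Finset.sum_const, Finset.card_univ, Fintype.card_fin, nsmul_eq_mul]
      push_cast
      ring
    calc (d : ℝ) * ((1 / ((N : ℝ) + 1)) * ∑ n : Fin (N + 1), lamF N n * ∫ t in Icc (0:ℝ) T,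
          (∫ s in (0:ℝ)..t, Real.exp (-(lamF N n) * (t - s)) * (‖v s‖ / A)))
        ≤ (d : ℝ) * ((1 / ((N : ℝ) + 1)) * (((N : ℝ) + 1) * ∫ s in Icc (0:ℝ) T, ‖v s‖ / A)) := by
          apply mul_le_mul_of_nonneg_left _ (Nat.cast_nonneg d)
          apply mul_le_mul_of_nonneg_left _ (by positivity)
          rw [← hcard]
          exact hbound
      _ = (d : ℝ) * ∫ s in Icc (0:ℝ) T, ‖v s‖ / A := by
          field_simp
  have hsplit : (∫ s in Icc (0:ℝ) T, ‖v s‖ / A) = (∫ s in Icc (0:ℝ) T, ‖v s‖) / A :=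
    integral_div A _
  have hvnn : 0 ≤ ∫ s in Icc (0:ℝ) T, ‖v s‖ :=
    integral_nonneg (fun s => norm_nonneg _)
  calc (∫ t in Icc (0:ℝ) T,
        ⨆ k : Fin (N + 1),
          ‖(((N : ℝ) + 1) ^ 2) • (ii t (k + 1) + ii t (k - 1) - (2:ℝ) • ii t k)‖)
      ≤ (d : ℝ) * ∫ s in Icc (0:ℝ) T, ‖v s‖ / A := le_trans hstep1 hstep2
    _ = ((d : ℝ) / A) * ∫ s in Icc (0:ℝ) T, ‖v s‖ := by
        rw [hsplit]; ring
    _ ≤ (((d : ℝ) + 1) / A) * ∫ s in Icc (0:ℝ) T, ‖v s‖ := by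
        refine mul_le_mul_of_nonneg_right ?_ hvnn
        gcongr
        linarith
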